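/- Let B be a Poincaré duality algebra of socle degree d over an infinite field k, generated in degree one by x₁,…,xₙ, and fix k < d/2 with the following property: for every subset W ⊆ {1,…,n} already satisfying ker(∑_{v∈W} t_v x_v : B^k → B^{k+1}) = ⋂_{v∈W} ker(x_v) for generic coefficients t_v, and every additional index w, the spaces x_w·(⋂_{v∈W} ker x_v) and im(generic ∑_{v∈W} t_v x_v) ∩ ⟨x_w⟩ intersect only in 0 (in B^{k+1}). Then a generic linear combination ℓ = ∑_v t_v x_v is injective as a map B^k → B^{k+1}. -/

import Mathlib

/-- A property `P` of coefficient vectors holds generically if it holds outside the zero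
set of some nonzero polynomial. -/
def GenericHolds {k : Type*} [Field k] {n : ℕ} (P : (Fin n → k) → Prop) : Prop :=
  ∃ p : MvPolynomial (Fin n) k, p ≠ 0 ∧ ∀ t : Fin n → k, MvPolynomial.eval t p ≠ 0 → P t

lemma aux_matrix_cancel {k : Type*} [Field k] {N : ℕ} (M : Matrix (Fin N) (Fin N) k)
    (hM : IsUnit M.det) {Mo : Type*} [AddCommGroup Mo] [Module k Mo] (y : Fin N → Mo)
    (hy : ∀ i, ∑ j, M i j • y j = 0) (j0 : Fin N) : y j0 = 0 := by
  have hinv : M⁻¹ * M = 1 := Matrix.nonsing_inv_mul M hM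
  have h1 : y j0 = ∑ j, ((M⁻¹ * M) j0 j) • y j := by
    rw [hinv]; simp [Matrix.one_apply, ite_smul]
  rw [h1]
  have h2 : ∀ j, ((M⁻¹ * M) j0 j) • y j = ∑ i, M⁻¹ j0 i • (M i j • y j) := by
    intro j
    rw [Matrix.mul_apply, Finset.sum_smul]
    simp [mul_smul]
  simp_rw [h2]
  rw [Finset.sum_comm]
  simp_rw [← Finset.smul_sum]
  simp [hy]

set_option maxHeartbeats 2000000 in
lemma aux_generic_from_point {k B : Type*} [Field k] [CommRing B] [Algebra k B]
    [FiniteDimensional k B] {n : ℕ} (x : Fin n → B) (Vs : Submodule k B)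
    (W : Finset (Fin n)) (t₀ : Fin n → k)
    (h₀ : ∀ u ∈ Vs, ((∑ v ∈ W, t₀ v • x v) * u = 0 ↔ ∀ v ∈ W, x v * u = 0)) :
    GenericHolds (fun t : Fin n → k => ∀ u ∈ Vs,
      ((∑ v ∈ W, t v • x v) * u = 0 ↔ ∀ v ∈ W, x v * u = 0)) := by
  classical
  set Kp : Submodule k ↥Vs :=
    { carrier := {u | ∀ v ∈ W, x v * (u : B) = 0}
      add_mem' := by
        intro a b ha hb v hv
        push_cast [mul_add]
        rw [ha v hv, hb v hv, add_zero]
      zero_mem' := by intro v hv; simp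
      smul_mem' := by
        intro c a ha v hv
        push_cast [mul_smul_comm]
        rw [ha v hv, smul_zero] } with hKp
  obtain ⟨Cp, hCp⟩ := Submodule.exists_isCompl Kp
  have hlKp : ∀ (t : Fin n → k) (u : ↥Vs), u ∈ Kp → (∑ v ∈ W, t v • x v) * (u : B) = 0 := by
    intro t u hu
    rw [Finset.sum_mul]
    refine Finset.sum_eq_zero fun v hv => ?_
    rw [smul_mul_assoc, hu v hv, smul_zero]
  set c := Module.finrank k ↥Cp with hc
  haveI : Module.Free k ↥Cp := Module.Free.of_divisionRing k ↥Cp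
  set e : Module.Basis (Fin c) k ↥Cp := Module.finBasis k ↥Cp with he
  set ℓ₀ : B := ∑ v ∈ W, t₀ v • x v with hℓ₀
  set fam : Fin c → B := fun j => ℓ₀ * ((e j : ↥Vs) : B) with hfam
  have hg : LinearIndependent k fam := by
    let g : ↥Cp →ₗ[k] B :=
      (LinearMap.mulLeft k ℓ₀).comp (Vs.subtype.comp Cp.subtype)
    have hginj : Function.Injective g := by
      rw [← LinearMap.ker_eq_bot (M := ↥Cp), LinearMap.ker_eq_bot']
      intro m hm
      have hm' : ℓ₀ * ((m : ↥Vs) : B) = 0 := hm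
      have hmv : ∀ v ∈ W, x v * ((m : ↥Vs) : B) = 0 := (h₀ _ (m : ↥Vs).2).mp hm'
      have hmem : (m : ↥Vs) ∈ Kp ⊓ Cp := ⟨hmv, m.2⟩
      rw [hCp.inf_eq_bot] at hmem
      have : ((m : ↥Vs) : ↥Vs) = 0 := (Submodule.mem_bot _).mp hmem
      exact Subtype.ext (by simpa using this)
    exact e.linearIndependent.map' g ((LinearMap.ker_eq_bot (M := ↥Cp)).mpr hginj)
  have hginj : Function.Injective fam := hg.injective
  set bs : Module.Basis _ k B := Module.Basis.extend (hg.linearIndepOn_id) with hbs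
  have hmemext : ∀ j : Fin c, fam j ∈ (hg.linearIndepOn_id).extend (Set.subset_univ _) :=
    fun j => (hg.linearIndepOn_id).subset_extend _ (Set.mem_range_self j)
  set φ : Fin c → (B →ₗ[k] k) := fun i => bs.coord ⟨fam i, hmemext i⟩ with hφ
  have hφδ : ∀ i j, φ i (fam j) = if j = i then 1 else 0 := by
    intro i j
    have hbj : bs ⟨fam j, hmemext j⟩ = fam j := Module.Basis.extend_apply_self _ _
    rw [← hbj, hφ]
    simp only [Module.Basis.coord_apply, Module.Basis.repr_self]
    rw [Finsupp.single_apply]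
    by_cases h : j = i
    · subst h; simp
    · have hne : (⟨fam j, hmemext j⟩ : ((hg.linearIndepOn_id).extend (Set.subset_univ _) : Set B))
        ≠ ⟨fam i, hmemext i⟩ := by
        intro hcon
        exact h (hginj (congrArg Subtype.val hcon))
      simp [hne, h]
  set p : MvPolynomial (Fin n) k := Matrix.det (Matrix.of fun i j : Fin c =>
    ∑ v ∈ W, MvPolynomial.C (φ i (x v * ((e j : ↥Vs) : B))) * MvPolynomial.X v) with hp
  have heval : ∀ t : Fin n → k, MvPolynomial.eval t p =
      Matrix.det (Matrix.of fun i j : Fin c => φ i ((∑ v ∈ W, t v • x v) * ((e j : ↥Vs) : B))) := by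
    intro t
    rw [hp, RingHom.map_det]
    congr 1
    ext i j
    simp only [RingHom.mapMatrix_apply, Matrix.map_apply, Matrix.of_apply]
    rw [map_sum]
    simp only [map_mul, MvPolynomial.eval_C, MvPolynomial.eval_X]
    rw [Finset.sum_mul]
    simp_rw [smul_mul_assoc]
    rw [map_sum]
    congr 1
    ext v
    rw [map_smul, smul_eq_mul, mul_comm]
  have hp0 : p ≠ 0 := by
    intro hcon
    have h1 : MvPolynomial.eval t₀ p = 1 := by
      rw [heval]
      have hid : (Matrix.of fun i j : Fin c => φ i ((∑ v ∈ W, t₀ v • x v) * ((e j : ↥Vs) : B)))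
          = (1 : Matrix (Fin c) (Fin c) k) := by
        ext i j
        rw [Matrix.of_apply, ← hℓ₀,
          show ℓ₀ * ((e j : ↥Vs) : B) = fam j from rfl, hφδ i j, Matrix.one_apply]
        simp [eq_comm]
      rw [hid, Matrix.det_one]
    rw [hcon] at h1
    simp at h1
  refine ⟨p, hp0, fun t ht => ?_⟩
  intro u hu
  constructor
  · intro hlu
    have hmem : (⟨u, hu⟩ : ↥Vs) ∈ Kp ⊔ Cp := by rw [hCp.sup_eq_top]; trivial
    obtain ⟨a, ha, b, hb, hab⟩ := Submodule.mem_sup.mp hmem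
    have habB : ((a : B)) + (b : B) = u := by simpa using congrArg Subtype.val hab
    have hub : (∑ v ∈ W, t v • x v) * ((b : ↥Vs) : B) = 0 := by
      have h2 := hlKp t a ha
      calc (∑ v ∈ W, t v • x v) * ((b : ↥Vs) : B)
          = (∑ v ∈ W, t v • x v) * (((a:↥Vs):B) + ((b:↥Vs):B))
            - (∑ v ∈ W, t v • x v) * ((a:↥Vs):B) := by ring
        _ = 0 := by rw [habB, hlu, h2, sub_zero]
    set bC : ↥Cp := ⟨b, hb⟩ with hbC
    have hbCsum : ((b : ↥Vs) : B) = ∑ j, e.repr bC j • ((e j : ↥Vs) : B) := by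
      have hsr := e.sum_repr bC
      calc ((b : ↥Vs) : B) = (((bC : ↥Cp) : ↥Vs) : B) := rfl
        _ = ((((∑ j, e.repr bC j • e j : ↥Cp) : ↥Vs)) : B) := by rw [hsr]
        _ = ∑ j, e.repr bC j • ((e j : ↥Vs) : B) := by push_cast; rfl
    have hsys : ∀ i, ∑ j, (Matrix.of fun i j : Fin c =>
        φ i ((∑ v ∈ W, t v • x v) * ((e j : ↥Vs) : B))) i j • e.repr bC j = 0 := by
      intro i
      have hexp : φ i ((∑ v ∈ W, t v • x v) * ((b : ↥Vs) : B))
          = ∑ j, (φ i ((∑ v ∈ W, t v • x v) * ((e j : ↥Vs) : B))) • e.repr bC j := by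
        rw [hbCsum, Finset.mul_sum, map_sum]
        congr 1
        ext j
        rw [mul_smul_comm, map_smul, smul_eq_mul, smul_eq_mul, mul_comm]
      simp only [Matrix.of_apply]
      rw [← hexp, hub, map_zero]
    have hdet : IsUnit ((Matrix.of fun i j : Fin c =>
        φ i ((∑ v ∈ W, t v • x v) * ((e j : ↥Vs) : B))).det) := by
      rw [isUnit_iff_ne_zero]
      rw [← heval t]
      exact ht
    have hb0 : bC = 0 := by
      have h0 : ∀ j, e.repr bC j = 0 := fun j => aux_matrix_cancel _ hdet _ hsys j
      have : e.repr bC = 0 := Finsupp.ext h0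
      exact e.repr.map_eq_zero_iff.mp this
    have hbz : (b : B) = 0 := by
      have : (b : ↥Vs) = 0 := by rw [show b = (bC : ↥Vs) from rfl, hb0]; rfl
      simpa using congrArg Subtype.val this
    have hua : u = (a : B) := by rw [← habB, hbz, add_zero]
    intro v hv
    rw [hua]
    exact ha v hv
  · intro hv
    exact hlKp t ⟨u, hu⟩ hv

open Polynomial in
/-- The Kronecker perturbation step: a single good scalar `s` exists. -/
lemma aux_kron {k B : Type*} [Field k] [Infinite k] [CommRing B] [Algebra k B]
    [FiniteDimensional k B] {n : ℕ} (x : Fin n → B) (Vs : Submodule k B)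
    (W : Finset (Fin n)) (ℓ xw : B)
    (h1 : ∀ u ∈ Vs, (ℓ * u = 0 ↔ ∀ v ∈ W, x v * u = 0))
    (h2 : ∀ u u', u ∈ Vs → u' ∈ Vs → (∀ v ∈ W, x v * u = 0) → xw * u = ℓ * u' → xw * u = 0) :
    ∃ s : k, ∀ u ∈ Vs, (s • xw + ℓ) * u = 0 → (∀ v ∈ W, x v * u = 0) ∧ xw * u = 0 := by
  classical
  by_contra hcon
  push_neg at hcon
  set N := Module.finrank k B + 1 with hN
  set s : Fin N → k := fun i => Infinite.natEmbedding k i with hs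
  have hsinj : Function.Injective s := by
    intro i j hij
    exact Fin.ext (Nat.cast_injective.eq_iff.mp ((Infinite.natEmbedding k).injective hij)) 
  choose u hu hker hbad using fun i : Fin N => hcon (s i)
  -- a nontrivial linear relation among the u i
  have hnli : ¬ LinearIndependent k u := by
    intro hli
    have := hli.fintype_card_le_finrank
    simp only [Fintype.card_fin, hN] at this
    omega
  obtain ⟨cc, hcc, i₀, hi₀⟩ := Fintype.not_linearIndependent_iff.mp hnli
  -- scalar interpolation polynomials
  set Pk : Fin N → Polynomial k :=
    fun i => Polynomial.C (cc i) * ∏ j ∈ Finset.univ.erase i, (Polynomial.X - Polynomial.C (s j))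
    with hPk
  have hprodmonic : ∀ i : Fin N,
      (∏ j ∈ Finset.univ.erase i, (Polynomial.X - Polynomial.C (s j))).Monic :=
    fun i => monic_prod_of_monic _ _ fun j _ => monic_X_sub_C (s j)
  have hproddeg : ∀ i : Fin N,
      (∏ j ∈ Finset.univ.erase i, (Polynomial.X - Polynomial.C (s j))).natDegree = N - 1 := by
    intro i
    rw [Polynomial.natDegree_prod _ _ (fun j _ => X_sub_C_ne_zero (s j))]
    simp [Finset.card_erase_of_mem]
  -- the polynomial family
  set uP : Polynomial B := ∑ i, Polynomial.C (u i) * (Pk i).map (algebraMap k B) with huP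
  have hUc : ∀ m, uP.coeff m = ∑ i, ((Pk i).coeff m) • u i := by
    intro m
    rw [huP, Polynomial.finset_sum_coeff]
    congr 1
    ext i
    rw [Polynomial.coeff_C_mul, Polynomial.coeff_map, mul_comm, ← Algebra.smul_def]
  have hUmem : ∀ m, uP.coeff m ∈ Vs := by
    intro m
    rw [hUc]
    exact Submodule.sum_mem _ fun i _ => Submodule.smul_mem _ _ (hu i)
  have hUtop : ∀ m, N - 1 ≤ m → uP.coeff m = 0 := by
    intro m hm
    rcases eq_or_lt_of_le hm with hm' | hm'
    · rw [hUc]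
      have : ∀ i : Fin N, (Pk i).coeff m = cc i := by
        intro i
        rw [hPk]
        simp only
        rw [Polynomial.coeff_C_mul, ← hm', ← hproddeg i, (hprodmonic i).coeff_natDegree,
          mul_one]
      simp_rw [this]
      exact hcc
    · rw [hUc]
      refine Finset.sum_eq_zero fun i _ => ?_
      have : (Pk i).coeff m = 0 := by
        apply Polynomial.coeff_eq_zero_of_natDegree_lt
        calc (Pk i).natDegree ≤ _ := Polynomial.natDegree_C_mul_le _ _
          _ < m := by rw [hproddeg i]; exact hm'
      rw [this, zero_smul]
  set q : Polynomial B := (Polynomial.C ℓ + Polynomial.C xw * Polynomial.X) * uP with hq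
  have hqc0 : q.coeff 0 = ℓ * uP.coeff 0 := by
    rw [hq, add_mul, Polynomial.coeff_add, Polynomial.coeff_C_mul, mul_assoc,
      Polynomial.coeff_C_mul]
    have : (Polynomial.X * uP).coeff 0 = 0 := by
      rw [Polynomial.coeff_X_mul_zero]
    rw [this, mul_zero, add_zero]
  have hqcs : ∀ m : ℕ, q.coeff (m + 1) = ℓ * uP.coeff (m + 1) + xw * uP.coeff m := by
    intro m
    rw [hq, add_mul, Polynomial.coeff_add, Polynomial.coeff_C_mul, mul_assoc,
      Polynomial.coeff_C_mul, Polynomial.coeff_X_mul]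
  have hqtop : ∀ m, N ≤ m → q.coeff m = 0 := by
    intro m hm
    rcases m with _ | m
    · omega
    · rw [hqcs, hUtop m (by omega), hUtop (m+1) (by omega), mul_zero, mul_zero, add_zero]
  have hqdeg : q.natDegree < N := by
    have : q.natDegree ≤ N - 1 := Polynomial.natDegree_le_iff_coeff_eq_zero.mpr
      fun M hM => hqtop M (by omega)
    omega
  have huPdeg : uP.natDegree < N := by
    have : uP.natDegree ≤ N - 1 := Polynomial.natDegree_le_iff_coeff_eq_zero.mpr
      fun M hM => hUtop M (by omega)
    omega
  -- evaluation of uP at the sample points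
  have hevaluP : ∀ i : Fin N, Polynomial.eval (algebraMap k B (s i)) uP
      = u i * algebraMap k B (Polynomial.eval (s i) (Pk i)) := by
    intro i
    rw [huP, Polynomial.eval_finset_sum]
    rw [Finset.sum_eq_single i]
    · rw [Polynomial.eval_mul, Polynomial.eval_C, Polynomial.eval_map,
        Polynomial.eval₂_at_apply]
    · intro j _ hji
      rw [Polynomial.eval_mul, Polynomial.eval_C, Polynomial.eval_map,
        Polynomial.eval₂_at_apply]
      have : Polynomial.eval (s i) (Pk j) = 0 := by
        rw [hPk]
        simp only
        rw [Polynomial.eval_mul, Polynomial.eval_prod]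
        have : ∏ j' ∈ Finset.univ.erase j, Polynomial.eval (s i) (Polynomial.X - Polynomial.C (s j')) = 0 := by
          apply Finset.prod_eq_zero (Finset.mem_erase.mpr ⟨fun h => hji h.symm, Finset.mem_univ i⟩)
          simp
        rw [this, mul_zero]
      rw [this, map_zero, mul_zero]
    · intro h
      exact absurd (Finset.mem_univ i) h
  have hevalq : ∀ i : Fin N, Polynomial.eval (algebraMap k B (s i)) q = 0 := by
    intro i
    rw [hq, Polynomial.eval_mul, Polynomial.eval_add, Polynomial.eval_C, Polynomial.eval_mul,
      Polynomial.eval_C, Polynomial.eval_X, hevaluP]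
    have hk := hker i
    have hsm : (s i) • xw = algebraMap k B (s i) * xw := Algebra.smul_def _ _
    calc (ℓ + xw * algebraMap k B (s i)) * (u i * algebraMap k B (Polynomial.eval (s i) (Pk i)))
        = ((s i • xw + ℓ) * u i) * algebraMap k B (Polynomial.eval (s i) (Pk i)) := by
          rw [hsm]; ring
      _ = 0 := by rw [hk, zero_mul]
  -- Vandermonde: all coefficients of q vanish
  have hvdm : ∀ i : Fin N, ∑ j : Fin N, (Matrix.vandermonde s) i j • q.coeff (j : ℕ) = 0 := by
    intro i
    have he := hevalq i
    rw [Polynomial.eval_eq_sum_range' hqdeg,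
      Finset.sum_range (fun m => q.coeff m * (algebraMap k B (s i)) ^ m)] at he
    rw [← he]
    apply Finset.sum_congr rfl
    intro j _
    rw [Matrix.vandermonde]
    simp only [Matrix.of_apply]
    rw [Algebra.smul_def, map_pow, mul_comm]
  have hvdet : IsUnit (Matrix.vandermonde s).det := by
    rw [isUnit_iff_ne_zero, Matrix.det_vandermonde]
    apply Finset.prod_ne_zero_iff.mpr
    intro i _
    apply Finset.prod_ne_zero_iff.mpr
    intro j hj
    have : i ≠ j := ne_of_lt (Finset.mem_Ioi.mp hj)
    exact sub_ne_zero_of_ne fun h => this (hsinj h.symm)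
  have hq0 : ∀ m : ℕ, q.coeff m = 0 := by
    intro m
    by_cases hm : m < N
    · exact aux_matrix_cancel _ hvdet _ hvdm ⟨m, hm⟩
    · exact hqtop m (by omega)
  -- the coefficient chase
  have hstep : ∀ m, ℓ * uP.coeff m = 0 →
      (∀ v ∈ W, x v * uP.coeff m = 0) ∧ xw * uP.coeff m = 0 := by
    intro m hm
    have hfirst := (h1 _ (hUmem m)).mp hm
    refine ⟨hfirst, ?_⟩
    apply h2 _ (-(uP.coeff (m+1))) (hUmem m) (Submodule.neg_mem _ (hUmem (m+1))) hfirst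
    have hid : ℓ * uP.coeff (m+1) + xw * uP.coeff m = 0 := by
      rw [← hqcs m]; exact hq0 (m+1)
    linear_combination hid
  have hmain : ∀ m, (∀ v ∈ W, x v * uP.coeff m = 0) ∧ xw * uP.coeff m = 0 := by
    intro m
    induction m with
    | zero => exact hstep 0 (by rw [← hqc0]; exact hq0 0)
    | succ m ih =>
      apply hstep (m+1)
      have hid : ℓ * uP.coeff (m+1) + xw * uP.coeff m = 0 := by
        rw [← hqcs m]; exact hq0 (m+1)
      have := ih.2
      linear_combination hid - this
  -- contradiction at i₀
  have hkill : ∀ z : B, (∀ m, z * uP.coeff m = 0) →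
      z * Polynomial.eval (algebraMap k B (s i₀)) uP = 0 := by
    intro z hz
    rw [Polynomial.eval_eq_sum_range' huPdeg, Finset.mul_sum]
    refine Finset.sum_eq_zero fun m _ => ?_
    rw [← mul_assoc, hz m, zero_mul]
  have hρ : Polynomial.eval (s i₀) (Pk i₀) ≠ 0 := by
    rw [hPk]
    simp only
    rw [Polynomial.eval_mul, Polynomial.eval_C, Polynomial.eval_prod]
    apply mul_ne_zero hi₀
    apply Finset.prod_ne_zero_iff.mpr
    intro j hj
    rw [Polynomial.eval_sub, Polynomial.eval_X, Polynomial.eval_C]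
    exact sub_ne_zero_of_ne fun h => (Finset.mem_erase.mp hj).1 (hsinj h).symm
  have hρu : IsUnit (algebraMap k B (Polynomial.eval (s i₀) (Pk i₀))) :=
    (isUnit_iff_ne_zero.mpr hρ).map (algebraMap k B)
  have hcancel : ∀ z : B, (∀ m, z * uP.coeff m = 0) → z * u i₀ = 0 := by
    intro z hz
    have h0 := hkill z hz
    rw [hevaluP i₀, ← mul_assoc] at h0
    have := hρu.mul_right_cancel (h0.trans (zero_mul _).symm)
    exact this
  apply hbad i₀
  · intro v hv
    exact hcancel (x v) fun m => (hmain m).1 v hv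
  · exact hcancel xw fun m => (hmain m).2



/-- If `B` is generated in degree one and `x v * u = 0` for all generators, with
`u` of low degree, then Poincaré duality forces `u = 0`. -/
lemma aux_pd_zero {k B : Type*} [Field k] [CommRing B] [Algebra k B]
    (𝒜 : ℕ → Submodule k B) [GradedAlgebra 𝒜]
    (d : ℕ) (deg : B →ₗ[k] k)
    (hPD : ∀ j : ℕ, j ≤ d → ∀ a ∈ 𝒜 j, (∀ b ∈ 𝒜 (d - j), deg (a * b) = 0) → a = 0)
    {n : ℕ} (x : Fin n → B) (hx : ∀ i, x i ∈ 𝒜 1)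
    (hgen : Algebra.adjoin k (Set.range x) = ⊤)
    (kk : ℕ) (hk : 2 * kk < d)
    (u : B) (hu : u ∈ 𝒜 kk) (hxu : ∀ v, x v * u = 0) : u = 0 := by
  classical
  set S : ℕ → Submodule k B :=
    fun m => Submodule.span k (Set.range fun f : Fin m → Fin n => ∏ i, x (f i)) with hS
  have hSA : ∀ m, S m ≤ Submodule.comap (LinearMap.id) (𝒜 m) := by
    intro m
    rw [hS, Submodule.span_le]
    rintro z ⟨f, rfl⟩
    simp only [Submodule.mem_comap, LinearMap.id_coe, id_eq]
    induction m with
    | zero => simpa using SetLike.one_mem_graded 𝒜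
    | succ m ih =>
      rw [Fin.prod_univ_succ]
      have := SetLike.mul_mem_graded (hx (f 0)) (ih (fun i => f i.succ))
      rwa [add_comm] at this
  have hSA' : ∀ m, ∀ z ∈ S m, z ∈ 𝒜 m := fun m z hz => hSA m hz
  have hSmul : ∀ m₁ m₂ : ℕ, ∀ a ∈ S m₁, ∀ b ∈ S m₂, a * b ∈ S (m₁ + m₂) := by
    intro m₁ m₂ a ha b hb
    have hle : S m₁ * S m₂ ≤ S (m₁ + m₂) := by
      rw [hS]
      simp only
      rw [Submodule.span_mul_span, Submodule.span_le]
      rintro z ⟨z₁, ⟨f, rfl⟩, z₂, ⟨g, rfl⟩, rfl⟩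
      apply Submodule.subset_span
      refine ⟨Fin.append f g, ?_⟩
      show (∏ i : Fin (m₁ + m₂), x (Fin.append f g i)) = (∏ i, x (f i)) * ∏ i, x (g i)
      rw [Fin.prod_univ_add]
      congr 1
      · exact Finset.prod_congr rfl fun i _ => by rw [Fin.append_left]
      · exact Finset.prod_congr rfl fun i _ => by rw [Fin.append_right]
    exact hle (Submodule.mul_mem_mul ha hb)
  have hclos : ∀ z ∈ Submonoid.closure (Set.range x), ∃ m, z ∈ S m := by
    intro z hz
    induction hz using Submonoid.closure_induction with
    | mem z hzm =>
      obtain ⟨v, rfl⟩ := hzm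
      exact ⟨1, Submodule.subset_span ⟨fun _ => v, by simp⟩⟩
    | one => exact ⟨0, Submodule.subset_span ⟨Fin.elim0, by simp⟩⟩
    | mul a b _ _ iha ihb =>
      obtain ⟨m₁, hm₁⟩ := iha
      obtain ⟨m₂, hm₂⟩ := ihb
      exact ⟨m₁ + m₂, hSmul m₁ m₂ a hm₁ b hm₂⟩
  -- every homogeneous element of degree m is in S m
  have hproj : ∀ m : ℕ, ∀ b ∈ 𝒜 m, b ∈ S m := by
    intro m b hb
    have hbmem : b ∈ Submodule.span k (Submonoid.closure (Set.range x) : Set B) := by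
      rw [← Algebra.adjoin_eq_span]
      rw [hgen]
      trivial
    have key : ∀ y ∈ Submodule.span k (Submonoid.closure (Set.range x) : Set B),
        ((DirectSum.decompose 𝒜 y) m : B) ∈ S m := by
      intro y hy
      induction hy using Submodule.span_induction with
      | mem z hzc =>
        obtain ⟨mz, hmz⟩ := hclos z hzc
        by_cases hmm : mz = m
        · subst hmm
          rw [DirectSum.decompose_of_mem_same 𝒜 (hSA' mz z hmz)]
          exact hmz
        · rw [DirectSum.decompose_of_mem_ne 𝒜 (hSA' mz z hmz) hmm]
          exact Submodule.zero_mem _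
      | zero => simp
      | add a b _ _ iha ihb =>
        rw [DirectSum.decompose_add, DirectSum.add_apply]
        push_cast
        exact Submodule.add_mem _ iha ihb
      | smul c a _ iha =>
        rw [DirectSum.decompose_smul, DirectSum.smul_apply]
        push_cast
        exact Submodule.smul_mem _ c iha
    have := key b hbmem
    rwa [DirectSum.decompose_of_mem_same 𝒜 hb] at this
  -- the annihilator submodule
  set T : Submodule k B := Submodule.comap (LinearMap.mulLeft k u) (LinearMap.ker deg) with hT
  have hTmem : ∀ y : B, y ∈ T ↔ deg (u * y) = 0 := by
    intro y
    rw [hT]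
    simp [LinearMap.mem_ker]
  have hgenzero : ∀ (m' : ℕ) (f : Fin (m' + 1) → Fin n), deg (u * ∏ i, x (f i)) = 0 := by
    intro m' f
    rw [Fin.prod_univ_succ, show u * (x (f 0) * ∏ i : Fin m', x (f i.succ))
      = (x (f 0) * u) * ∏ i : Fin m', x (f i.succ) from by ring, hxu (f 0), zero_mul, map_zero]
  have hST : S (d - kk) ≤ T := by
    obtain ⟨m', hm'⟩ : ∃ m', d - kk = m' + 1 := ⟨d - kk - 1, by omega⟩
    rw [hS]
    simp only
    rw [hm', Submodule.span_le]
    rintro z ⟨f, rfl⟩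
    rw [SetLike.mem_coe, hTmem]
    exact hgenzero m' f
  apply hPD kk (by omega) u hu
  intro b hb
  have hbT : b ∈ T := hST (hproj (d - kk) b hb)
  rw [hTmem] at hbT
  exact hbT

/-- Building Lefschetz elements by the perturbation lemma: if the transversal prime
property can always be extended by one more vertex, then a generic linear combination
`ℓ = ∑ t_v x_v` is injective `B^k → B^{k+1}`. -/
theorem stmt15 {k B : Type*} [Field k] [Infinite k] [CommRing B] [Algebra k B]
    [FiniteDimensional k B]
    (𝒜 : ℕ → Submodule k B) [GradedAlgebra 𝒜]
    (d : ℕ) (deg : B →ₗ[k] k)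
    (hPD : ∀ j : ℕ, j ≤ d → ∀ a ∈ 𝒜 j, (∀ b ∈ 𝒜 (d - j), deg (a * b) = 0) → a = 0)
    {n : ℕ} (x : Fin n → B) (hx : ∀ i, x i ∈ 𝒜 1)
    (hgen : Algebra.adjoin k (Set.range x) = ⊤)
    (kk : ℕ) (hk : 2 * kk < d)
    -- transversal prime property: whenever the kernel of a generic combination over `W`
    -- is the common kernel, for each extra vertex `w` the spaces
    -- `x_w ⋅ (⋂_{v ∈ W} ker x_v)` and `im (generic ∑_{v ∈ W} t_v x_v) ∩ ⟨x_w⟩`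
    -- intersect trivially
    (htrans : ∀ W : Finset (Fin n),
      GenericHolds (fun t : Fin n → k => ∀ u ∈ 𝒜 kk,
        ((∑ v ∈ W, t v • x v) * u = 0 ↔ ∀ v ∈ W, x v * u = 0)) →
      ∀ w : Fin n,
        GenericHolds (fun t : Fin n → k => ∀ u u', u ∈ 𝒜 kk → u' ∈ 𝒜 kk →
          (∀ v ∈ W, x v * u = 0) →
          x w * u = (∑ v ∈ W, t v • x v) * u' → x w * u = 0)) :
    GenericHolds (fun t : Fin n → k => ∀ u ∈ 𝒜 kk,
      (∑ v : Fin n, t v • x v) * u = 0 → u = 0) := by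
  classical
  have hind : ∀ W : Finset (Fin n), GenericHolds (fun t : Fin n → k => ∀ u ∈ 𝒜 kk,
      ((∑ v ∈ W, t v • x v) * u = 0 ↔ ∀ v ∈ W, x v * u = 0)) := by
    intro W
    induction W using Finset.induction_on with
    | empty =>
      refine ⟨1, one_ne_zero, fun t _ => ?_⟩
      intro u hu
      simp
    | @insert w W hw ih =>
      obtain ⟨q, hq0, hq⟩ := htrans W ih w
      obtain ⟨p, hp0, hp⟩ := ih
      have hpq : p * q ≠ 0 := mul_ne_zero hp0 hq0
      obtain ⟨t₁, ht₁⟩ : ∃ t₁ : Fin n → k, MvPolynomial.eval t₁ (p * q) ≠ 0 := by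
        by_contra h
        push_neg at h
        exact hpq (MvPolynomial.funext fun z => by rw [map_zero]; exact h z)
      have hP := hp t₁ (fun h => ht₁ (by rw [map_mul, h, zero_mul]))
      have hQ := hq t₁ (fun h => ht₁ (by rw [map_mul, h, mul_zero]))
      obtain ⟨s, hs⟩ := aux_kron x (𝒜 kk) W (∑ v ∈ W, t₁ v • x v) (x w) hP hQ
      set t₀ := Function.update t₁ w s with ht₀
      have hsum : ∑ v ∈ insert w W, t₀ v • x v = s • x w + ∑ v ∈ W, t₁ v • x v := by
        rw [Finset.sum_insert hw]
        congr 1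
        · rw [ht₀, Function.update_self]
        · refine Finset.sum_congr rfl fun v hv => ?_
          rw [ht₀, Function.update_of_ne (ne_of_mem_of_not_mem hv hw)]
      apply aux_generic_from_point x (𝒜 kk) (insert w W) t₀
      intro u hu
      constructor
      · intro h0
        rw [hsum] at h0
        obtain ⟨h1, h2⟩ := hs u hu h0
        intro v hv
        rcases Finset.mem_insert.mp hv with rfl | hv'
        · exact h2
        · exact h1 v hv'
      · intro hv
        rw [hsum, add_mul, smul_mul_assoc, hv w (Finset.mem_insert_self w W), smul_zero,
          zero_add, Finset.sum_mul]
        refine Finset.sum_eq_zero fun v hv' => ?_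
        rw [smul_mul_assoc, hv v (Finset.mem_insert_of_mem hv'), smul_zero]
  obtain ⟨p, hp0, hp⟩ := hind Finset.univ
  refine ⟨p, hp0, fun t ht => ?_⟩
  intro u hu h0
  have hall := (hp t ht u hu).mp h0
  exact aux_pd_zero 𝒜 d deg hPD x hx hgen kk hk u hu fun v => hall v (Finset.mem_univ v)
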